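/- Let S_n be the semigroup generated by x₀,…,x_n subject to the relations x_i = x_i x_j for all i > j. If α = αβ holds in S_n for elements α, β, then deg α > deg β, where deg(x₀^{a₀}⋯x_n^{a_n}) is the largest i with a_i ≠ 0. Consequently, any semigroup homomorphism S_n → S_m forces n ≤ m, so the category of semigroups fails the ascending chain condition on strongly connected components. -/

import Mathlib

/-- The semigroup `S n` generated by `x₀, …, x_n` subject to `x_i = x_i x_j`
for `i > j`, presented by normal forms: an element is a finitely supported
exponent vector `x₀^{a₀} x₁^{a₁} ⋯ x_n^{a_n}`, not all exponents zero. -/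
def NF (n : ℕ) : Type :=
  { a : ℕ → ℕ // (∃ i, a i ≠ 0) ∧ ∀ i, n < i → a i = 0 }

/-- The degree of a normal form: the largest `i` with `a i ≠ 0`. -/
def NF.deg {n : ℕ} (a : NF n) : ℕ :=
  Nat.findGreatest (fun i => a.1 i ≠ 0) n

/-- Multiplication of normal forms: exponents of the second factor at indices
below the degree of the first factor are absorbed. -/
instance (n : ℕ) : Mul (NF n) where
  mul a b := ⟨fun i => if i < a.deg then a.1 i else a.1 i + b.1 i, by
    constructor
    · obtain ⟨i, hi⟩ := a.2.1
      refine ⟨i, ?_⟩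
      by_cases h : i < a.deg
      · simpa [h] using hi
      · simp only [if_neg h]
        omega
    · intro i hi
      have ha := a.2.2 i hi
      have hb := b.2.2 i hi
      have : ¬ i < a.deg := by
        have : a.deg ≤ n := Nat.findGreatest_le n
        omega
      simp [this, ha, hb]⟩

theorem NF.mul_val {n : ℕ} (a b : NF n) (i : ℕ) :
    (a * b).1 i = if i < a.deg then a.1 i else a.1 i + b.1 i := rfl

theorem NF.deg_le {n : ℕ} (a : NF n) : a.deg ≤ n := Nat.findGreatest_le n

theorem NF.deg_spec {n : ℕ} (a : NF n) : a.1 a.deg ≠ 0 := by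
  obtain ⟨i, hi⟩ := a.2.1
  have hin : i ≤ n := by
    by_contra h
    exact hi (a.2.2 i (by omega))
  unfold NF.deg
  exact Nat.findGreatest_spec (P := fun i => a.1 i ≠ 0) hin hi

theorem NF.eq_zero_of_deg_lt {n : ℕ} (a : NF n) {i : ℕ} (h : a.deg < i) :
    a.1 i = 0 := by
  unfold NF.deg at h
  by_cases hin : i ≤ n
  · by_contra hne
    exact Nat.findGreatest_is_greatest (P := fun i => a.1 i ≠ 0) h hin hne
  · exact a.2.2 i (by omega)

theorem NF.deg_mul {n : ℕ} (a b : NF n) : (a * b).deg = max a.deg b.deg := by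
  set M := max a.deg b.deg with hM
  have hMn : M ≤ n := max_le a.deg_le b.deg_le
  have hent : (a * b).1 M ≠ 0 := by
    rw [NF.mul_val]
    have hnlt : ¬ M < a.deg := by omega
    rw [if_neg hnlt]
    rcases le_total b.deg a.deg with h | h
    · have hMa : M = a.deg := by omega
      have ha := a.deg_spec
      rw [hMa]
      omega
    · have hMb : M = b.deg := by omega
      have hb := b.deg_spec
      rw [hMb]
      omega
  have h1 : M ≤ (a * b).deg := by
    unfold NF.deg
    exact Nat.le_findGreatest hMn hent
  have h2 : (a * b).deg ≤ M := by
    by_contra h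
    have hd := (a * b).deg_spec
    rw [NF.mul_val] at hd
    have ha : a.1 (a * b).deg = 0 := a.eq_zero_of_deg_lt (by omega)
    have hb : b.1 (a * b).deg = 0 := b.eq_zero_of_deg_lt (by omega)
    by_cases hlt : (a * b).deg < a.deg
    · omega
    · simp only [if_neg hlt, ha, hb] at hd
      omega
  omega

instance (n : ℕ) : Semigroup (NF n) where
  mul_assoc a b c := by
    apply Subtype.ext
    funext i
    simp only [NF.mul_val, NF.deg_mul]
    by_cases h1 : i < a.deg
    · have : i < max a.deg b.deg := lt_of_lt_of_le h1 (le_max_left _ _)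
      simp [h1, this]
    · by_cases h2 : i < b.deg
      · have : i < max a.deg b.deg := lt_of_lt_of_le h2 (le_max_right _ _)
        simp [h1, h2, this]
      · have : ¬ i < max a.deg b.deg := by
          simp only [not_lt, max_le_iff]
          omega
        simp [h1, h2, this]
        omega

/-- In `S n`, if `α = α β` then `deg α > deg β`; consequently every semigroup
homomorphism `S n → S m` forces `n ≤ m`, and since there are canonical
homomorphisms `S n → S (n+1)`, the category of semigroups fails the ascending
chain condition on strongly connected components. -/
theorem NF.deg_eq_of {n : ℕ} (a : NF n) {i : ℕ} (h1 : a.1 i ≠ 0)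
    (h2 : ∀ k, i < k → a.1 k = 0) : a.deg = i := by
  rcases lt_trichotomy a.deg i with h | h | h
  · exact absurd (a.eq_zero_of_deg_lt h) h1
  · exact h
  · exact absurd (h2 _ h) a.deg_spec

theorem key_lemma (n : ℕ) (α β : NF n) (h : α = α * β) : β.deg < α.deg := by
  by_contra hc
  have h' : α.1 β.deg = (α * β).1 β.deg := by rw [← h]
  rw [NF.mul_val, if_neg (by omega)] at h'
  have := β.deg_spec
  omega

/-- the singleton generator `x_i` as an element of `NF n`, for `i ≤ n`. -/
def NF.gen (n i : ℕ) (h : i ≤ n) : NF n :=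
  ⟨fun k => if k = i then 1 else 0,
   ⟨i, by simp⟩, fun k hk => by simp; omega⟩

theorem NF.gen_deg (n i : ℕ) (h : i ≤ n) : (NF.gen n i h).deg = i := by
  apply NF.deg_eq_of
  · simp [NF.gen]
  · intro k hk; simp [NF.gen]; omega

theorem NF.gen_absorb (n i j : ℕ) (hi : i ≤ n) (hj : j < i) :
    NF.gen n i hi = NF.gen n i hi * NF.gen n j (by omega) := by
  apply Subtype.ext
  funext k
  rw [NF.mul_val, NF.gen_deg]
  by_cases hk : k < i
  · simp [hk]
  · simp only [if_neg hk, NF.gen]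
    simp only [not_lt] at hk
    have : k ≠ j := by omega
    simp [this]
theorem semigroup_chain_no_acc :
    (∀ (n : ℕ) (α β : NF n), α = α * β → β.deg < α.deg) ∧
    (∀ n : ℕ, Nonempty (NF n →ₙ* NF (n + 1))) ∧
    (∀ n m : ℕ, Nonempty (NF n →ₙ* NF m) → n ≤ m) := by
  refine ⟨key_lemma, fun n => ⟨?_⟩, fun n m ⟨f⟩ => ?_⟩
  · refine ⟨fun a => ⟨a.1, a.2.1, fun i hi => a.2.2 i (by omega)⟩, ?_⟩
    have hdeg : ∀ a : NF n,
        (NF.deg (n := n + 1) ⟨a.1, a.2.1, fun i hi => a.2.2 i (by omega)⟩) = a.deg := by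
      intro a
      unfold NF.deg
      rw [Nat.findGreatest_succ]
      simp [a.2.2 (n + 1) (by omega)]
    intro a b
    apply Subtype.ext
    funext i
    simp only [NF.mul_val, hdeg]
    show _ = (if i < NF.deg (n := n + 1) ⟨a.1, a.2.1, fun i hi => a.2.2 i (by omega)⟩
      then a.1 i else a.1 i + b.1 i)
    rw [hdeg]
  · have hmono : ∀ i j (hi : i ≤ n) (hj : j ≤ n), j < i →
        (f (NF.gen n j hj)).deg < (f (NF.gen n i hi)).deg := by
      intro i j hi hj hji
      apply key_lemma
      have := congrArg f (NF.gen_absorb n i j hi hji)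
      rwa [map_mul] at this
    have hge : ∀ i (hi : i ≤ n), i ≤ (f (NF.gen n i hi)).deg := by
      intro i
      induction i with
      | zero => omega
      | succ k ih =>
        intro hi
        have h1 := ih (by omega)
        have h2 := hmono (k + 1) k hi (by omega) (by omega)
        omega
    have := hge n le_rfl
    have := (f (NF.gen n n le_rfl)).deg_le
    omega
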